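/- Let G be a finite group of order p·m where p is a prime and gcd(p, m) = 1 (i.e., p divides |G| exactly to the first power). Then p does not divide [ρ(G)]_p, the exponent of p in the prime factorization of ρ(G). -/

import Mathlib

open scoped MatrixGroups

section AuxForRho

variable {G : Type*} [Group G]

private lemma aux_conj_eq {w u : G} (hc : Commute w u) :
    w * u * w⁻¹ = u := by rw [hc.eq, mul_inv_cancel_right]

/-- A `p`-torsion element commuting with an element of order `p` lies in the cyclic
subgroup it generates, when `p` divides the group order exactly once. -/
private lemma aux_mem_zpowers [Finite G] {p m : ℕ} (hp : p.Prime)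
    (hG : Nat.card G = p * m) (hcop : Nat.Coprime p m) {x z : G}
    (hx : orderOf x = p) (hz : z ^ p = 1) (hcomm : Commute x z) :
    z ∈ Subgroup.zpowers x := by
  haveI : Fact p.Prime := ⟨hp⟩
  have hPx : IsPGroup p (Subgroup.zpowers x) :=
    IsPGroup.of_card (by rw [Nat.card_zpowers, hx, pow_one])
  have hoz : orderOf z ∣ p := orderOf_dvd_of_pow_eq_one hz
  have hPz : IsPGroup p (Subgroup.zpowers z) := by
    rcases (Nat.Prime.eq_one_or_self_of_dvd hp _ hoz) with h | h
    · exact IsPGroup.of_card (by rw [Nat.card_zpowers, h, pow_zero])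
    · exact IsPGroup.of_card (by rw [Nat.card_zpowers, h, pow_one])
  have hnorm : Subgroup.zpowers z ≤ Subgroup.normalizer (Subgroup.zpowers x : Set G) := by
    rintro w hw
    obtain ⟨k, rfl⟩ := hw
    rw [Subgroup.mem_normalizer_iff]
    intro h
    constructor
    · rintro ⟨j, rfl⟩
      exact (aux_conj_eq ((hcomm.symm.zpow_zpow k j))) ▸ ⟨j, rfl⟩
    · rintro ⟨j, hj⟩
      beta_reduce at hj
      have h1 : h = x ^ j := by
        have hce := aux_conj_eq ((hcomm.symm.zpow_zpow k j))
        have h2 : (z ^ k)⁻¹ * (x ^ j) * (z ^ k) = h := by rw [hj]; group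
        rw [← h2]
        calc (z^k)⁻¹ * (x^j) * z^k
            = (z^k)⁻¹ * (z ^ k * x ^ j * (z ^ k)⁻¹) * z^k := by rw [hce]
          _ = x ^ j := by group
      exact h1 ▸ ⟨j, rfl⟩
  have hS : IsPGroup p ((Subgroup.zpowers z) ⊔ (Subgroup.zpowers x) : Subgroup G) :=
    IsPGroup.to_sup_of_normal_right' hPz hPx hnorm
  obtain ⟨k, hk⟩ := IsPGroup.iff_card.mp hS
  have hdvd : p ^ k ∣ p * m := by
    rw [← hk, ← hG]; exact Subgroup.card_subgroup_dvd_card _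
  have hk1 : k ≤ 1 := by
    by_contra hk2
    push_neg at hk2
    have : p ^ 2 ∣ p * m := dvd_trans (pow_dvd_pow p hk2) hdvd
    rw [pow_two] at this
    have hpm : p ∣ m := (Nat.mul_dvd_mul_iff_left hp.pos).mp this
    exact (Nat.Prime.coprime_iff_not_dvd hp).mp hcop hpm
  have hle : Subgroup.zpowers x ≤ (Subgroup.zpowers z) ⊔ (Subgroup.zpowers x) := le_sup_right
  have heq : Subgroup.zpowers x = (Subgroup.zpowers z) ⊔ (Subgroup.zpowers x) := by
    apply Subgroup.eq_of_le_of_card_ge hle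
    rw [hk, Nat.card_zpowers, hx]
    calc p ^ k ≤ p ^ 1 := Nat.pow_le_pow_right hp.pos hk1
    _ = p := pow_one p
  exact heq ▸ Subgroup.mem_sup_left (Subgroup.mem_zpowers z)

/-- Conjugation action of `zpowers x` on `{g // g ^ m = 1}`. -/
private def conjActionAux (x : G) (m : ℕ) :
    MulAction (Subgroup.zpowers x) {g : G // g ^ m = 1} where
  smul z g := ⟨(z : G) * g * (z : G)⁻¹, by
    rw [conj_pow, g.2, mul_one, mul_inv_cancel]⟩
  one_smul g := by
    apply Subtype.ext
    show (1 : G) * g * (1 : G)⁻¹ = g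
    simp
  mul_smul z w g := by
    apply Subtype.ext
    show ((z * w : Subgroup.zpowers x) : G) * g * ((z * w : Subgroup.zpowers x) : G)⁻¹
        = (z : G) * ((w : G) * g * (w : G)⁻¹) * (z : G)⁻¹
    push_cast
    group

private lemma card_fixed_aux (x : G) (m : ℕ) :
    letI := conjActionAux x m
    Nat.card (MulAction.fixedPoints (Subgroup.zpowers x) {g : G // g ^ m = 1})
      = Nat.card {h : G // h ^ m = 1 ∧ h ∈ Subgroup.centralizer {x}} := by
  letI := conjActionAux x m
  apply Nat.card_congr
  refine ⟨fun g => ⟨g.1.1, g.1.2, ?_⟩, fun h => ⟨⟨h.1, h.2.1⟩, ?_⟩, ?_, ?_⟩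
  · -- fixed → centralizer
    have hfix := g.2 ⟨x, Subgroup.mem_zpowers x⟩
    have := congrArg Subtype.val hfix
    rw [Subgroup.mem_centralizer_singleton_iff]
    have h2 : x * (g.1 : G) * x⁻¹ = g.1 := this
    conv_lhs => rw [← h2]
    group
  · -- centralizer → fixed
    rintro ⟨w, hw⟩
    obtain ⟨k, rfl⟩ := hw
    apply Subtype.ext
    have hc : Commute x h.1 := Subgroup.mem_centralizer_iff.mp h.2.2 x (Set.mem_singleton x)
    exact aux_conj_eq (hc.zpow_left k)
  · intro g; apply Subtype.ext; rfl
  · intro h; apply Subtype.ext; rfl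

private lemma card_centralizer_aux [Finite G] {p m : ℕ} (hp : p.Prime)
    (hG : Nat.card G = p * m) (hcop : Nat.Coprime p m) {x : G} (hx : orderOf x = p) :
    Nat.card ↥(Subgroup.centralizer {x}) =
      p * Nat.card {h : G // h ^ m = 1 ∧ h ∈ Subgroup.centralizer {x}} := by
  haveI : Fact p.Prime := ⟨hp⟩
  have hxc : x ∈ Subgroup.centralizer {x} :=
    Subgroup.mem_centralizer_iff.mpr (by rintro y hy; rw [Set.mem_singleton_iff] at hy; rw [hy])
  have hmem : ∀ (i : ZMod p) (h : {h : G // h ^ m = 1 ∧ h ∈ Subgroup.centralizer {x}}),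
      x ^ i.val * h.1 ∈ Subgroup.centralizer {x} :=
    fun i h => Subgroup.mul_mem _ (Subgroup.pow_mem _ hxc _) h.2.2
  have key : Function.Bijective
      (fun ih : ZMod p × {h : G // h ^ m = 1 ∧ h ∈ Subgroup.centralizer {x}} =>
        (⟨x ^ (ih.1.val) * ih.2.1, hmem ih.1 ih.2⟩ : ↥(Subgroup.centralizer {x}))) := by
    constructor
    · rintro ⟨i, g, hg1, hg2⟩ ⟨j, h, hh1, hh2⟩ heq
      simp only [Subtype.mk.injEq] at heq
      have hcxg : Commute x g := Subgroup.mem_centralizer_iff.mp hg2 x (Set.mem_singleton x)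
      set c : G := x ^ ((i.val : ℤ) - (j.val : ℤ)) with hc
      have hcg : Commute c g := hcxg.zpow_left _
      have hcsplit : c = (x ^ (j.val))⁻¹ * x ^ (i.val) := by
        rw [hc, zpow_sub, zpow_natCast, zpow_natCast]
        exact ((Commute.refl x).pow_pow i.val j.val).inv_right.eq
      have hhcg : h = c * g := by
        rw [hcsplit, mul_assoc, heq]; group
      have hxp : x ^ p = 1 := by rw [← hx]; exact pow_orderOf_eq_one x
      have hcp : c ^ p = 1 := by
        rw [hc, ← zpow_natCast, ← zpow_mul, mul_comm, zpow_mul, zpow_natCast,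
          hxp, one_zpow]
      have hcm : c ^ m = 1 := by
        have := hh1
        rw [hhcg, hcg.mul_pow, hg1, mul_one] at this
        exact this
      have hc1 : c = 1 := by
        rw [← orderOf_eq_one_iff]
        have : orderOf c ∣ Nat.gcd p m :=
          Nat.dvd_gcd (orderOf_dvd_of_pow_eq_one hcp) (orderOf_dvd_of_pow_eq_one hcm)
        rwa [hcop, Nat.dvd_one] at this
      have hgh : g = h := by rw [hhcg, hc1, one_mul]
      have hij : i = j := by
        have hxx : x ^ i.val = x ^ j.val := by
          apply mul_right_cancel (b := g)
          rw [heq, hgh]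
        have := pow_eq_pow_iff_modEq.mp hxx
        rw [hx] at this
        have hv : i.val = j.val := by
          have h1 := i.val_lt
          have h2 := j.val_lt
          unfold Nat.ModEq at this
          rwa [Nat.mod_eq_of_lt h1, Nat.mod_eq_of_lt h2] at this
        exact ZMod.val_injective p hv
      exact Prod.ext hij (Subtype.ext (by exact hgh))
    · rintro ⟨h, hh⟩
      have hcxh : Commute x h := Subgroup.mem_centralizer_iff.mp hh x (Set.mem_singleton x)
      have hzp : (h ^ m) ^ p = 1 := by
        rw [← pow_mul, mul_comm, ← hG, pow_card_eq_one']
      have hcxz : Commute x (h ^ m) := hcxh.pow_right m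
      have hzmem : h ^ m ∈ Subgroup.zpowers x := aux_mem_zpowers hp hG hcop hx hzp hcxz
      have hxp : x ^ p = 1 := by rw [← hx]; exact pow_orderOf_eq_one x
      have hfin : IsOfFinOrder x := isOfFinOrder_iff_pow_eq_one.mpr ⟨p, hp.pos, hxp⟩
      obtain ⟨n, hn⟩ := hfin.mem_powers_iff_mem_zpowers.mpr hzmem
      beta_reduce at hn
      set i : ZMod p := (n : ZMod p) * (m : ZMod p)⁻¹ with hi
      have hxm : x ^ (i.val * m) = x ^ n := by
        rw [pow_eq_pow_iff_modEq, hx, ← ZMod.natCast_eq_natCast_iff]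
        push_cast
        rw [ZMod.natCast_zmod_val, hi, mul_assoc, mul_comm ((m : ZMod p))⁻¹ _,
          ZMod.coe_mul_inv_eq_one m hcop.symm, mul_one]
      refine ⟨⟨i, ⟨(x ^ i.val)⁻¹ * h, ?_, ?_⟩⟩, ?_⟩
      · have hcom : Commute ((x ^ i.val)⁻¹) h := (hcxh.pow_left i.val).inv_left
        rw [hcom.mul_pow, inv_pow, ← pow_mul, hxm, hn, inv_mul_cancel]
      · exact Subgroup.mul_mem _ (Subgroup.inv_mem _ (Subgroup.pow_mem _ hxc _)) hh
      · apply Subtype.ext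
        show x ^ i.val * ((x ^ i.val)⁻¹ * h) = h
        rw [mul_inv_cancel_left]
  have := Nat.card_eq_of_bijective _ key
  rw [← this, Nat.card_prod, Nat.card_zmod]

end AuxForRho

/-- `rho G` is the product of the orders of all elements of `G`. -/
noncomputable def rho (G : Type*) [Monoid G] : ℕ := ∏ᶠ g : G, orderOf g

/-- `expRho G` is the set of exponents in the prime factorization of `rho G`. -/
noncomputable def expRho (G : Type*) [Monoid G] : Finset ℕ :=
  (rho G).factorization.support.image fun p => (rho G).factorization p

theorem p_not_dvd_p_part (G : Type*) [Group G] [Finite G]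
    (p m : ℕ) (hp : p.Prime) (hG : Nat.card G = p * m)
    (hcop : Nat.Coprime p m) :
    ¬ p ∣ (rho G).factorization p := by
  classical
  haveI : Fact p.Prime := ⟨hp⟩
  cases nonempty_fintype G
  have hord : ∀ g : G, orderOf g ∣ p * m := fun g => hG ▸ orderOf_dvd_natCard g
  have hnotpm : ¬ p ∣ m := (Nat.Prime.coprime_iff_not_dvd hp).mp hcop
  have hval : ∀ g : G, (orderOf g).factorization p = if p ∣ orderOf g then 1 else 0 := by
    intro g
    by_cases hd : p ∣ orderOf g
    · rw [if_pos hd]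
      have h0 : orderOf g ≠ 0 := (orderOf_pos g).ne'
      have h1 : 1 ≤ (orderOf g).factorization p :=
        (Nat.Prime.dvd_iff_one_le_factorization hp h0).mp hd
      have h2 : (orderOf g).factorization p ≤ 1 := by
        by_contra hgt
        push_neg at hgt
        have h3 : p ^ 2 ∣ orderOf g :=
          (Nat.Prime.pow_dvd_iff_le_factorization hp h0).mpr hgt
        have h4 : p ^ 2 ∣ p * m := h3.trans (hord g)
        rw [pow_two] at h4
        exact hnotpm ((Nat.mul_dvd_mul_iff_left hp.pos).mp h4)
      omega
    · rw [if_neg hd, Nat.factorization_eq_zero_of_not_dvd hd]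
  have hsum : (rho G).factorization p
      = (Finset.univ.filter (fun g : G => p ∣ orderOf g)).card := by
    rw [rho, finprod_eq_prod_of_fintype,
      Nat.factorization_prod (fun g _ => (orderOf_pos g).ne'),
      Finset.card_filter, Finsupp.finset_sum_apply]
    exact Finset.sum_congr rfl fun g _ => hval g
  rw [hsum]
  intro hdvd
  -- translate to the count of solutions of `g ^ m = 1`
  have hiff : ∀ g : G, (¬ p ∣ orderOf g) ↔ g ^ m = 1 := by
    intro g
    constructor
    · intro hnd
      have hco : Nat.Coprime (orderOf g) p :=
        Nat.coprime_comm.mp ((Nat.Prime.coprime_iff_not_dvd hp).mpr hnd)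
      exact orderOf_dvd_iff_pow_eq_one.mp ((Nat.Coprime.dvd_mul_left hco).mp (hord g))
    · intro hgm hd
      exact hnotpm (hd.trans (orderOf_dvd_iff_pow_eq_one.mpr hgm))
  have hcompl := Finset.card_filter_add_card_filter_not
      (s := (Finset.univ : Finset G)) (p := fun g : G => p ∣ orderOf g)
  have hfilterneg : (Finset.univ.filter (fun g : G => ¬ p ∣ orderOf g))
      = (Finset.univ.filter (fun g : G => g ^ m = 1)) := by
    apply Finset.filter_congr
    intro g _
    exact hiff g
  have hpG : p ∣ Finset.univ.card (α := G) := by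
    rw [← Fintype.card, ← Nat.card_eq_fintype_card, hG]
    exact dvd_mul_right p m
  have hpX : p ∣ (Finset.univ.filter (fun g : G => g ^ m = 1)).card := by
    rw [← hfilterneg]
    have heq : (Finset.univ.filter (fun g : G => ¬ p ∣ orderOf g)).card
        = Finset.univ.card (α := G)
          - (Finset.univ.filter (fun g : G => p ∣ orderOf g)).card := by omega
    rw [heq]
    exact Nat.dvd_sub hpG hdvd
  have hXcard : Nat.card {g : G // g ^ m = 1}
      = (Finset.univ.filter (fun g : G => g ^ m = 1)).card := by
    rw [Nat.card_eq_fintype_card]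
    exact Fintype.card_subtype _
  -- Cauchy: an element of order p
  obtain ⟨x, hx⟩ := exists_prime_orderOf_dvd_card' (G := G) p
    (by rw [hG]; exact dvd_mul_right p m)
  letI := conjActionAux x m
  have hP : IsPGroup p (Subgroup.zpowers x) :=
    IsPGroup.of_card (by rw [Nat.card_zpowers, hx, pow_one])
  have hmod := hP.card_modEq_card_fixedPoints {g : G // g ^ m = 1}
  rw [card_fixed_aux x m] at hmod
  have hcent := card_centralizer_aux hp hG hcop hx
  have hdvdH : Nat.card ↥(Subgroup.centralizer {x}) ∣ p * m :=
    hG ▸ Subgroup.card_subgroup_dvd_card _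
  rw [hcent] at hdvdH
  have hfd : Nat.card {h : G // h ^ m = 1 ∧ h ∈ Subgroup.centralizer {x}} ∣ m :=
    (Nat.mul_dvd_mul_iff_left hp.pos).mp hdvdH
  have hnp : ¬ p ∣ Nat.card {h : G // h ^ m = 1 ∧ h ∈ Subgroup.centralizer {x}} :=
    fun hc => hnotpm (hc.trans hfd)
  apply hnp
  have h0 : Nat.card {g : G // g ^ m = 1} ≡ 0 [MOD p] := by
    rw [hXcard]
    exact (Nat.modEq_zero_iff_dvd).mpr hpX
  exact (Nat.modEq_zero_iff_dvd).mp (hmod.symm.trans h0)
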